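/- Let p be a real polynomial of degree at most √N that is bounded: |p(k)| ≤ 1 for all integers k ∈ {0, 1, …, N}. Then |p(x)| ≤ 4 for all real x ∈ [0, N]. -/

import Mathlib

set_option maxHeartbeats 1000000

open Finset Polynomial

lemma prod_one_add_mul_le {s : Finset ℕ} {t : ℕ → ℝ} (ht : ∀ j ∈ s, 0 ≤ t j)
    {v : ℝ} (hv0 : 0 ≤ v) (hv1 : v ≤ 1) :
    ∏ j ∈ s, (1 + v * t j) ≤ 1 + v * (∏ j ∈ s, (1 + t j) - 1) := by
  induction s using Finset.cons_induction with
  | empty => simp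
  | cons a s ha ih =>
    rw [Finset.prod_cons, Finset.prod_cons]
    have hts : ∀ j ∈ s, 0 ≤ t j := fun j hj => ht j (Finset.mem_cons_of_mem hj)
    have hta : 0 ≤ t a := ht a (Finset.mem_cons_self a s)
    have hQ : (1:ℝ) ≤ ∏ j ∈ s, (1 + t j) := by
      have : ∏ j ∈ s, (1:ℝ) ≤ ∏ j ∈ s, (1 + t j) := by
        apply Finset.prod_le_prod (fun j hj => by norm_num)
        intro j hj
        have := hts j hj
        linarith
      simpa using this
    have ihs := ih hts
    have h1 : (0:ℝ) ≤ ∏ j ∈ s, (1 + v * t j) := by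
      apply Finset.prod_nonneg
      intro j hj
      have := hts j hj
      nlinarith
    calc (1 + v * t a) * ∏ j ∈ s, (1 + v * t j)
        ≤ (1 + v * t a) * (1 + v * (∏ j ∈ s, (1 + t j) - 1)) := by
          apply mul_le_mul_of_nonneg_left ihs (by nlinarith)
      _ ≤ 1 + v * ((1 + t a) * ∏ j ∈ s, (1 + t j) - 1) := by
          have hkey := mul_nonneg (mul_nonneg (mul_nonneg hv0 hta) (sub_nonneg.2 hQ)) (sub_nonneg.2 hv1)
          nlinarith

lemma prod_one_add_inv_sq_le (b : ℕ) (hb : 1 ≤ b) :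
    ∏ j ∈ range b, (1 + 1 / ((j:ℝ)+1)^2) ≤ 4 - 4 / ((b:ℝ)+1) := by
  induction b with
  | zero => omega
  | succ n ih =>
    rcases Nat.eq_or_lt_of_le hb with h | h
    · simp [← h]
      norm_num
    · have hn : 1 ≤ n := by omega
      have ihn := ih hn
      rw [Finset.prod_range_succ]
      have hn1 : (0:ℝ) < (n:ℝ) + 1 := by positivity
      have hfac : (0:ℝ) ≤ 1 + 1/((n:ℝ)+1)^2 := by positivity
      have key : (4 - 4/((n:ℝ)+1)) * (1 + 1/((n:ℝ)+1)^2) ≤ 4 - 4/((n:ℝ)+2) := by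
        set t : ℝ := (n:ℝ)+1 with ht
        have ht1 : (1:ℝ) ≤ t := by rw [ht]; have : (0:ℝ) ≤ (n:ℝ) := Nat.cast_nonneg n; linarith
        have ht0 : (0:ℝ) < t := by linarith
        have h1 : (4 - 4/t) * (1 + 1/t^2) = 4 - (4*(t^2 - t + 1))/t^3 := by
          field_simp
          ring
        have h2 : 4/(t+1) ≤ (4*(t^2-t+1))/t^3 := by
          rw [div_le_div_iff₀ (by positivity) (by positivity)]
          nlinarith
        rw [show (n:ℝ)+2 = t+1 by rw [ht]; ring]
        linarith
      push_cast
      calc (∏ j ∈ range n, (1 + 1 / ((j:ℝ)+1)^2)) * (1 + 1/((n:ℝ)+1)^2)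
          ≤ (4 - 4/((n:ℝ)+1)) * (1 + 1/((n:ℝ)+1)^2) := by
            apply mul_le_mul_of_nonneg_right ihn hfac
        _ ≤ 4 - 4/((n:ℝ)+1+1) := by
            rw [show (n:ℝ)+1+1 = (n:ℝ)+2 by ring]; exact key

lemma prod_one_add_v_le (b : ℕ) {v : ℝ} (hv0 : 0 ≤ v) (hv1 : v ≤ 1) :
    ∏ j ∈ range b, (1 + v / ((j:ℝ)+1)^2) ≤ 1 + 3 * v := by
  have h1 : ∀ j ∈ range b, (0:ℝ) ≤ 1 / ((j:ℝ)+1)^2 := fun j _ => by positivity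
  have h2 := prod_one_add_mul_le h1 hv0 hv1
  simp_rw [mul_one_div] at h2
  have h3 : ∏ j ∈ range b, (1 + 1 / ((j:ℝ)+1)^2) ≤ 4 := by
    rcases Nat.eq_zero_or_pos b with h | h
    · simp [h]
    · have h4 := prod_one_add_inv_sq_le b h
      have h5 : (0:ℝ) < 4/((b:ℝ)+1) := by positivity
      linarith
  nlinarith

lemma sum_inv_sq_sq_le (b : ℕ) :
    ∑ i ∈ range b, 1 / (((i:ℝ)+1)^2 * (((i:ℝ)+1)^2 + 1)) ≤ 3/5 := by
  have key : ∀ n : ℕ, 1 ≤ n → ∑ i ∈ range n, 1 / (((i:ℝ)+1)^2 * (((i:ℝ)+1)^2 + 1)) ≤ 3/5 - 1/(10*(n:ℝ)) := by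
    intro n hn
    induction n with
    | zero => omega
    | succ k ih =>
      rcases Nat.eq_or_lt_of_le hn with h | h
      · simp [← h]; norm_num
      · have hk : 1 ≤ k := by omega
        have ihk := ih hk
        rw [Finset.sum_range_succ]
        push_cast
        have hk1 : (1:ℝ) ≤ (k:ℝ) := by exact_mod_cast hk
        have step : 1 / (((k:ℝ)+1)^2 * (((k:ℝ)+1)^2 + 1)) ≤ 1/(10*(k:ℝ)) - 1/(10*((k:ℝ)+1)) := by
          rw [div_sub_div _ _ (by positivity) (by positivity), div_le_div_iff₀ (by positivity) (by positivity)]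
          ring_nf
          nlinarith [hk1, sq_nonneg ((k:ℝ)-1)]
        linarith
  rcases Nat.eq_zero_or_pos b with h | h
  · simp [h]; norm_num
  · have h4 := key b h
    have : (0:ℝ) < 1/(10*(b:ℝ)) := by positivity
    linarith

/-- KEY inductive product inequality (in ℕ). -/
lemma key_prod_ineq (i : ℕ) (hi : 1 ≤ i) : ∀ c : ℕ,
    (∏ j ∈ range (i-1), (j+1)) * (∏ k ∈ range c, (i+k+1)^2) * (∏ k ∈ range i, (c+i+k+1))
      ≤ 2 * ((∏ j ∈ range (i-1), (i+j+1)) * (∏ k ∈ range c, ((k+1)*(2*i+k+1)))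
          * (∏ k ∈ range i, (c+k+1))) := by
  intro c
  induction c with
  | zero =>
    apply Nat.le_of_eq
    obtain ⟨n, rfl⟩ : ∃ n, i = n + 1 := ⟨i - 1, by omega⟩
    simp only [Nat.add_sub_cancel, prod_range_succ, zero_add]
    ring_nf
  | succ c ih =>
    set A := ∏ j ∈ range (i-1), (j+1) with hA
    set B := ∏ j ∈ range (i-1), (i+j+1) with hB
    set P := ∏ k ∈ range c, (i+k+1)^2 with hP
    set Q := ∏ k ∈ range c, ((k+1)*(2*i+k+1)) with hQ
    set H1 := ∏ k ∈ range i, (c+i+k+1) with hH1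
    set H2 := ∏ k ∈ range i, (c+k+1) with hH2
    set H1' := ∏ k ∈ range i, (c+1+i+k+1) with hH1'
    set H2' := ∏ k ∈ range i, (c+1+k+1) with hH2'
    have h1 : H1' * (c+i+1) = H1 * (c+2*i+1) := by
      have e1 : ∏ k ∈ range (i+1), (c+i+k+1) = H1' * (c+i+1) := by
        rw [Finset.prod_range_succ', hH1']
        simp only [show ∀ x:ℕ, c+i+(x+1)+1 = c+1+i+x+1 from fun x => by omega]
      have e2 : ∏ k ∈ range (i+1), (c+i+k+1) = H1 * (c+2*i+1) := by
        rw [Finset.prod_range_succ, hH1, show c+i+i+1 = c+2*i+1 by ring]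
      rw [← e1, e2]
    have h2 : H2' * (c+1) = H2 * (c+i+1) := by
      have e1 : ∏ k ∈ range (i+1), (c+k+1) = H2' * (c+1) := by
        rw [Finset.prod_range_succ', hH2']
        simp only [show ∀ x:ℕ, c+(x+1)+1 = c+1+x+1 from fun x => by omega]
      have e2 : ∏ k ∈ range (i+1), (c+k+1) = H2 * (c+i+1) := by
        rw [Finset.prod_range_succ, hH2]
      rw [← e1, e2]
    rw [Finset.prod_range_succ, Finset.prod_range_succ]
    refine Nat.le_of_mul_le_mul_left ?_ (show 0 < (c+1)*(c+i+1) by positivity)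
    calc (c+1)*(c+i+1) * (A * (P * (i+c+1)^2) * H1')
        = ((c+1)*(i+c+1)^2*A*P) * (H1'*(c+i+1)) := by ring
      _ = ((c+1)*(i+c+1)^2*A*P) * (H1*(c+2*i+1)) := by rw [h1]
      _ = ((c+1)*(i+c+1)^2*(c+2*i+1)) * (A*P*H1) := by ring
      _ ≤ ((c+1)*(i+c+1)^2*(c+2*i+1)) * (2*(B*Q*H2)) := Nat.mul_le_mul_left _ ih
      _ = (2*(c+1)*(i+c+1)*(c+2*i+1)*B*Q) * (H2*(c+i+1)) := by ring
      _ = (2*(c+1)*(i+c+1)*(c+2*i+1)*B*Q) * (H2'*(c+1)) := by rw [h2]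
      _ = (c+1)*(c+i+1) * (2 * (B * (Q * ((c+1)*(2*i+c+1))) * H2')) := by ring

lemma key_stripped (i c : ℕ) (hi : 1 ≤ i) :
    (∏ j ∈ range (i-1), (j+1)) * (∏ k ∈ range c, (i+k+1)^2)
      ≤ 2 * ((∏ j ∈ range (i-1), (i+j+1)) * (∏ k ∈ range c, ((k+1)*(2*i+k+1)))) := by
  have hk := key_prod_ineq i hi c
  set A := ∏ j ∈ range (i-1), (j+1)
  set B := ∏ j ∈ range (i-1), (i+j+1)
  set P := ∏ k ∈ range c, (i+k+1)^2
  set Q := ∏ k ∈ range c, ((k+1)*(2*i+k+1))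
  set H1 := ∏ k ∈ range i, (c+i+k+1) with hH1
  set H2 := ∏ k ∈ range i, (c+k+1) with hH2
  have hH : H2 ≤ H1 := by
    apply Finset.prod_le_prod'
    intro k _
    omega
  have hH2pos : 0 < H2 := by
    apply Finset.prod_pos
    intro k _
    omega
  refine Nat.le_of_mul_le_mul_right ?_ hH2pos
  calc A * P * H2 ≤ A * P * H1 := Nat.mul_le_mul_left _ hH
    _ ≤ 2 * (B * Q * H2) := hk
    _ = 2 * (B * Q) * H2 := by ring

lemma nat_master (b i : ℕ) (hi : 1 ≤ i) (hib : i ≤ b) :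
    i^2 * ∏ j ∈ ((range (b+1)).erase i).erase 0, j^2
      ≤ 2 * ∏ j ∈ (range (b+1)).erase i, (if j < i then i^2 - j^2 else j^2 - i^2) := by
  obtain ⟨n, rfl⟩ : ∃ n, i = n + 1 := ⟨i - 1, by omega⟩
  set c := b - (n+1) with hc
  have hS : (range (b+1)).erase (n+1) = range (n+1) ∪ Ico (n+2) (b+1) := by
    ext x
    simp only [mem_erase, mem_range, mem_union, mem_Ico]
    omega
  have hT : ((range (b+1)).erase (n+1)).erase 0 = ((range (n+1)).erase 0) ∪ Ico (n+2) (b+1) := by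
    ext x
    simp only [mem_erase, mem_range, mem_union, mem_Ico]
    omega
  have hdisj1 : Disjoint (range (n+1)) (Ico (n+2) (b+1)) := by
    rw [Finset.disjoint_left]
    intro x hx hx'
    simp only [mem_range] at hx
    simp only [mem_Ico] at hx'
    omega
  have hdisj2 : Disjoint ((range (n+1)).erase 0) (Ico (n+2) (b+1)) :=
    hdisj1.mono_left (Finset.erase_subset _ _)
  have hre : (range (n+1)).erase 0 = Finset.image Nat.succ (range n) := by
    ext x
    simp only [mem_erase, mem_range, Finset.mem_image]
    constructor
    · intro ⟨h1, h2⟩; exact ⟨x - 1, by omega, by omega⟩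
    · rintro ⟨y, hy, rfl⟩; omega
  have hL : ∏ j ∈ ((range (b+1)).erase (n+1)).erase 0, j^2
      = (∏ j ∈ range n, (j+1)^2) * (∏ k ∈ range c, (n+1+1+k)^2) := by
    rw [hT, Finset.prod_union hdisj2, hre, Finset.prod_image (fun a _ b _ h => Nat.succ_injective h)]
    congr 1
    rw [Finset.prod_Ico_eq_prod_range, show b+1-(n+2) = c from by omega]
  have hR : ∏ j ∈ (range (b+1)).erase (n+1), (if j < n+1 then (n+1)^2 - j^2 else j^2 - (n+1)^2)
      = ((∏ j ∈ range n, (j+1)) * (n+1)) * ((∏ j ∈ range n, (n+1+j+1)) * (n+1))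
        * (∏ k ∈ range c, ((k+1)*(2*(n+1)+k+1))) := by
    rw [hS, Finset.prod_union hdisj1]
    have h1 : ∏ j ∈ range (n+1), (if j < n+1 then (n+1)^2 - j^2 else j^2 - (n+1)^2)
        = ((∏ j ∈ range n, (j+1)) * (n+1)) * ((∏ j ∈ range n, (n+1+j+1)) * (n+1)) := by
      have e1 : ∀ j ∈ range (n+1), (if j < n+1 then (n+1)^2 - j^2 else j^2 - (n+1)^2)
          = (n+1-j)*(n+1+j) := by
        intro j hj
        simp only [mem_range] at hj
        rw [if_pos hj]
        have h2 : j ≤ n+1 := hj.le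
        have h3 : j^2 ≤ (n+1)^2 := Nat.pow_le_pow_left h2 2
        zify [h2, h3]
        ring
      rw [Finset.prod_congr rfl e1, Finset.prod_mul_distrib]
      congr 1
      · have hrefl := Finset.prod_range_reflect (fun j => j + 1) (n+1)
        have e2 : ∀ j ∈ range (n+1), n+1-j = (n+1-1-j) + 1 := by
          intro j hj; simp only [mem_range] at hj; omega
        rw [Finset.prod_congr rfl e2, hrefl, Finset.prod_range_succ]
      · rw [Finset.prod_range_succ']
        rw [Finset.prod_congr rfl
          (fun x _ => by rw [show n+1+(x+1) = n+1+x+1 from by omega] :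
            ∀ x ∈ range n, n+1+(x+1) = n+1+x+1), Nat.add_zero]
    have h2 : ∏ j ∈ Ico (n+2) (b+1), (if j < n+1 then (n+1)^2 - j^2 else j^2 - (n+1)^2)
        = ∏ k ∈ range c, ((k+1)*(2*(n+1)+k+1)) := by
      rw [Finset.prod_Ico_eq_prod_range, show b+1-(n+2) = c from by omega]
      apply Finset.prod_congr rfl
      intro k _
      rw [if_neg (by omega)]
      have h4 : (n+1)^2 ≤ (n+2+k)^2 := Nat.pow_le_pow_left (by omega) 2
      zify [h4]
      ring
    rw [h1, h2]
  rw [hL, hR]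
  have hstrip := key_stripped (n+1) c hi
  simp only [Nat.add_sub_cancel] at hstrip
  calc (n+1)^2 * ((∏ j ∈ range n, (j+1)^2) * (∏ k ∈ range c, (n+1+1+k)^2))
      = ((n+1)^2 * (∏ j ∈ range n, (j+1))) * ((∏ j ∈ range n, (j+1)) * (∏ k ∈ range c, (n+1+1+k)^2)) := by
        rw [Finset.prod_pow]
        ring
    _ = ((n+1)^2 * (∏ j ∈ range n, (j+1))) * ((∏ j ∈ range n, (j+1)) * (∏ k ∈ range c, (n+1+k+1)^2)) := by
        rw [Finset.prod_congr rfl (fun k _ => by rw [show n+1+1+k = n+1+k+1 from by omega] :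
          ∀ k ∈ range c, (n+1+1+k)^2 = (n+1+k+1)^2)]
    _ ≤ ((n+1)^2 * (∏ j ∈ range n, (j+1))) * (2 * ((∏ j ∈ range n, (n+1+j+1)) * (∏ k ∈ range c, ((k+1)*(2*(n+1)+k+1))))) :=
        Nat.mul_le_mul_left _ hstrip
    _ = 2 * ((∏ j ∈ range n, (j+1)) * (n+1) * ((∏ j ∈ range n, (n+1+j+1)) * (n+1)) * (∏ k ∈ range c, ((k+1)*(2*(n+1)+k+1)))) := by
        ring

lemma range_erase_zero (b : ℕ) : (range (b+1)).erase 0 = Finset.image Nat.succ (range b) := by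
  ext x
  simp only [mem_erase, mem_range, Finset.mem_image]
  constructor
  · intro ⟨h1, h2⟩; exact ⟨x - 1, by omega, by omega⟩
  · rintro ⟨y, hy, rfl⟩; omega

/-- numerator bound -/
lemma num_bound (b i : ℕ) (hi : 1 ≤ i) {v : ℝ} (hv0 : 0 ≤ v) (hv1 : v ≤ 1) :
    ∏ j ∈ (range (b+1)).erase i, (v + (j:ℝ)^2)
      ≤ v * (1+3*v) * ∏ j ∈ ((range (b+1)).erase i).erase 0, (j:ℝ)^2 := by
  have h0mem : 0 ∈ (range (b+1)).erase i := by
    simp only [mem_erase, mem_range]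
    omega
  rw [← Finset.mul_prod_erase _ _ h0mem]
  simp only [Nat.cast_zero]
  norm_num
  set T := ((range (b+1)).erase i).erase 0 with hTdef
  have hT0 : ∀ j ∈ T, j ≠ 0 := fun j hj => (Finset.mem_erase.mp hj).1
  have e1 : ∏ j ∈ T, (v + (j:ℝ)^2) = (∏ j ∈ T, (1 + v/(j:ℝ)^2)) * ∏ j ∈ T, (j:ℝ)^2 := by
    rw [← Finset.prod_mul_distrib]
    apply Finset.prod_congr rfl
    intro j hj
    have hj0 : (0:ℝ) < (j:ℝ)^2 := by
      have := hT0 j hj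
      positivity
    show v + (j:ℝ)^2 = (1 + v/(j:ℝ)^2) * (j:ℝ)^2
    rw [add_mul, one_mul, div_mul_cancel₀ _ hj0.ne', add_comm]
  have e2 : ∏ j ∈ T, (1 + v/(j:ℝ)^2) ≤ 1 + 3*v := by
    have hsub : T ⊆ (range (b+1)).erase 0 := by
      rw [hTdef]
      intro j hj
      simp only [Finset.mem_erase, Finset.mem_range] at hj ⊢
      omega
    have h1 : ∏ j ∈ T, (1 + v/(j:ℝ)^2) ≤ ∏ j ∈ (range (b+1)).erase 0, (1 + v/(j:ℝ)^2) := by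
      have e : ∏ j ∈ (range (b+1)).erase 0, (if j ∈ T then (1 + v/(j:ℝ)^2) else 1)
          = ∏ j ∈ T, (1 + v/(j:ℝ)^2) := by
        rw [Finset.prod_ite_mem, Finset.inter_eq_right.mpr hsub]
      rw [← e]
      apply Finset.prod_le_prod
      · intro j _
        split
        · positivity
        · norm_num
      · intro j _
        split
        · exact le_rfl
        · have : 0 ≤ v / (j:ℝ)^2 := by positivity
          linarith
    have h2 : ∏ j ∈ (range (b+1)).erase 0, (1 + v/(j:ℝ)^2)
        = ∏ k ∈ range b, (1 + v/((k:ℝ)+1)^2) := by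
      rw [range_erase_zero, Finset.prod_image (fun a _ b _ h => Nat.succ_injective h)]
      apply Finset.prod_congr rfl
      intro k _
      push_cast
      ring_nf
    calc ∏ j ∈ T, (1 + v/(j:ℝ)^2) ≤ _ := h1
      _ = _ := h2
      _ ≤ 1 + 3*v := prod_one_add_v_le b hv0 hv1
  calc v * ∏ j ∈ T, (v + (j:ℝ)^2) = v * ((∏ j ∈ T, (1 + v/(j:ℝ)^2)) * ∏ j ∈ T, (j:ℝ)^2) := by
        rw [e1]
    _ ≤ v * ((1+3*v) * ∏ j ∈ T, (j:ℝ)^2) := by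
        apply mul_le_mul_of_nonneg_left _ hv0
        apply mul_le_mul_of_nonneg_right e2
        positivity
    _ = v * (1+3*v) * ∏ j ∈ T, (j:ℝ)^2 := by ring

/-- ratio bound for i ≥ 1 -/
lemma ratio_bound (b i : ℕ) (hi : 1 ≤ i) (hib : i ≤ b) {v : ℝ} (hv0 : 0 ≤ v) (hv1 : v ≤ 1) :
    ∏ j ∈ (range (b+1)).erase i, ((v + (j:ℝ)^2) / |(i:ℝ)^2 - (j:ℝ)^2|)
      ≤ 2*v*(1+3*v) / (i:ℝ)^2 := by
  set S := (range (b+1)).erase i with hSdef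
  have hSne : ∀ j ∈ S, j ≠ i := fun j hj => (Finset.mem_erase.mp hj).1
  have habs : ∀ j ∈ S, |(i:ℝ)^2 - (j:ℝ)^2|
      = ((if j < i then i^2 - j^2 else j^2 - i^2 : ℕ) : ℝ) := by
    intro j hj
    have hne := hSne j hj
    rcases lt_or_gt_of_ne hne with h | h
    · rw [if_pos h]
      have h3 : j^2 ≤ i^2 := Nat.pow_le_pow_left h.le 2
      rw [abs_of_pos]
      · push_cast [h3]; ring
      · have : (j:ℝ) < (i:ℝ) := by exact_mod_cast h
        have hj0 : (0:ℝ) ≤ (j:ℝ) := by positivity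
        nlinarith
    · rw [if_neg (by omega)]
      have h3 : i^2 ≤ j^2 := Nat.pow_le_pow_left h.le 2
      rw [abs_of_nonpos]
      · push_cast [h3]; ring
      · have : (i:ℝ) < (j:ℝ) := by exact_mod_cast h
        have hi0 : (0:ℝ) ≤ (i:ℝ) := by positivity
        nlinarith
  have hdpos : ∀ j ∈ S, (0:ℝ) < |(i:ℝ)^2 - (j:ℝ)^2| := by
    intro j hj
    have hne := hSne j hj
    rw [abs_pos]
    intro hcon
    apply hne
    have : (j:ℝ)^2 = (i:ℝ)^2 := by linarith
    have : (j:ℝ) = (i:ℝ) := by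
      have hj0 : (0:ℝ) ≤ (j:ℝ) := by positivity
      have hi0 : (0:ℝ) ≤ (i:ℝ) := by positivity
      nlinarith
    exact_mod_cast this
  rw [Finset.prod_div_distrib]
  have hDpos : (0:ℝ) < ∏ j ∈ S, |(i:ℝ)^2 - (j:ℝ)^2| := Finset.prod_pos hdpos
  rw [div_le_div_iff₀ hDpos (by positivity)]
  have hnum := num_bound b i hi hv0 hv1
  have hnumpos : (0:ℝ) ≤ ∏ j ∈ S, (v + (j:ℝ)^2) :=
    Finset.prod_nonneg (fun j _ => by positivity)
  -- key cast inequality : i² * ∏_{T} j² ≤ 2 * D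
  have hcast : (i:ℝ)^2 * ∏ j ∈ S.erase 0, (j:ℝ)^2 ≤ 2 * ∏ j ∈ S, |(i:ℝ)^2 - (j:ℝ)^2| := by
    have hD : ∏ j ∈ S, |(i:ℝ)^2 - (j:ℝ)^2|
        = ((∏ j ∈ S, (if j < i then i^2 - j^2 else j^2 - i^2) : ℕ) : ℝ) := by
      rw [Nat.cast_prod]
      exact Finset.prod_congr rfl habs
    have hP : ∏ j ∈ S.erase 0, (j:ℝ)^2 = ((∏ j ∈ S.erase 0, j^2 : ℕ) : ℝ) := by
      rw [Nat.cast_prod]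
      push_cast
      rfl
    rw [hD, hP]
    have := nat_master b i hi hib
    exact_mod_cast this
  have hTnonneg : (0:ℝ) ≤ ∏ j ∈ S.erase 0, (j:ℝ)^2 :=
    Finset.prod_nonneg (fun j _ => by positivity)
  calc (∏ j ∈ S, (v + (j:ℝ)^2)) * (i:ℝ)^2
      ≤ (v * (1+3*v) * ∏ j ∈ S.erase 0, (j:ℝ)^2) * (i:ℝ)^2 := by
        apply mul_le_mul_of_nonneg_right hnum (by positivity)
    _ = (v * (1+3*v)) * ((i:ℝ)^2 * ∏ j ∈ S.erase 0, (j:ℝ)^2) := by ring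
    _ ≤ (v * (1+3*v)) * (2 * ∏ j ∈ S, |(i:ℝ)^2 - (j:ℝ)^2|) := by
        apply mul_le_mul_of_nonneg_left hcast (by nlinarith)
    _ = 2*v*(1+3*v) * ∏ j ∈ S, |(i:ℝ)^2 - (j:ℝ)^2| := by ring

/-- ratio bound for i = 0 -/
lemma ratio_bound0 (b : ℕ) {v : ℝ} (hv0 : 0 ≤ v) (hv1 : v ≤ 1) :
    ∏ j ∈ (range (b+1)).erase 0, ((v + (j:ℝ)^2) / |(0:ℝ)^2 - (j:ℝ)^2|)
      ≤ 1 + 3*v := by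
  rw [range_erase_zero, Finset.prod_image (fun a _ b _ h => Nat.succ_injective h)]
  have e : ∀ k ∈ range b, (v + ((Nat.succ k : ℕ):ℝ)^2) / |(0:ℝ)^2 - ((Nat.succ k : ℕ):ℝ)^2|
      = 1 + v/((k:ℝ)+1)^2 := by
    intro k _
    have h1 : ((Nat.succ k : ℕ):ℝ) = (k:ℝ)+1 := by push_cast; ring
    rw [h1]
    have h2 : (0:ℝ) < ((k:ℝ)+1)^2 := by positivity
    rw [show (0:ℝ)^2 - ((k:ℝ)+1)^2 = -(((k:ℝ)+1)^2) by ring, abs_neg, abs_of_pos h2]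
    field_simp
    ring
  rw [Finset.prod_congr rfl e]
  exact prod_one_add_v_le b hv0 hv1

/-- cross-side bound -/
lemma cross_bound (a : ℕ) {w : ℝ} (hw0 : 0 ≤ w) (hw1 : w ≤ 1) {c : ℝ} (hc : 0 ≤ c) :
    ∏ j ∈ range (a+1), ((w + (j:ℝ)^2) / (1 + c + (j:ℝ)^2)) ≤ w / (1 + c) := by
  rw [Finset.prod_range_succ']
  have e0 : (w + ((0:ℕ):ℝ)^2) / (1 + c + ((0:ℕ):ℝ)^2) = w/(1+c) := by norm_num
  rw [e0]
  have h1 : ∏ j ∈ range a, ((w + (((j+1):ℕ):ℝ)^2) / (1 + c + (((j+1):ℕ):ℝ)^2)) ≤ 1 := by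
    apply Finset.prod_le_one
    · intro j _
      positivity
    · intro j _
      rw [div_le_one (by positivity)]
      linarith
  have h2 : (0:ℝ) ≤ w / (1+c) := by positivity
  exact mul_le_of_le_one_left h2 h1

/-- the core lemma on a unit interval [m, m+1] -/
lemma core_bound (N : ℕ) (p : Polynomial ℝ)
    (hbound : ∀ k : ℕ, k ≤ N → |p.eval (k : ℝ)| ≤ 1)
    (m a b : ℕ) (ham : a^2 ≤ m) (hbN : m+1+b^2 ≤ N) (hdeg : p.natDegree ≤ a+b+1)
    (x : ℝ) (hx0 : (m:ℝ) ≤ x) (hx1 : x ≤ (m:ℝ)+1) : |p.eval x| ≤ 4 := by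
  set u : ℝ := x - (m:ℝ) with hu
  set v : ℝ := 1 - u with hv
  have hu0 : 0 ≤ u := by simp [hu]; linarith
  have hu1 : u ≤ 1 := by simp [hu]; linarith
  have hv0 : 0 ≤ v := by simp [hv]; linarith
  have hv1 : v ≤ 1 := by simp [hv]; linarith
  set fL : ℕ → ℝ := fun j => (m:ℝ) - (j:ℝ)^2 with hfL
  set fR : ℕ → ℝ := fun j => (m:ℝ) + 1 + (j:ℝ)^2 with hfR
  set L : Finset ℝ := Finset.image fL (range (a+1)) with hL
  set R : Finset ℝ := Finset.image fR (range (b+1)) with hR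
  set s : Finset ℝ := L ∪ R with hs
  have cast_inj_sq : ∀ (j k : ℕ), (j:ℝ)^2 = (k:ℝ)^2 → j = k := by
    intro j k h
    have hj0 : (0:ℝ) ≤ (j:ℝ) := Nat.cast_nonneg j
    have hk0 : (0:ℝ) ≤ (k:ℝ) := Nat.cast_nonneg k
    have : (j:ℝ) = (k:ℝ) := by nlinarith
    exact_mod_cast this
  have hLinj : ∀ j ∈ range (a+1), ∀ k ∈ range (a+1), fL j = fL k → j = k := by
    intro j _ k _ h
    apply cast_inj_sq
    simp only [hfL] at h
    linarith
  have hRinj : ∀ j ∈ range (b+1), ∀ k ∈ range (b+1), fR j = fR k → j = k := by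
    intro j _ k _ h
    apply cast_inj_sq
    simp only [hfR] at h
    linarith
  have hRinj' : Function.Injective fR := by
    intro j k h
    apply cast_inj_sq
    simp only [hfR] at h
    linarith
  have hLinj' : Function.Injective fL := by
    intro j k h
    apply cast_inj_sq
    simp only [hfL] at h
    linarith
  have hLval : ∀ y ∈ L, y ≤ (m:ℝ) := by
    intro y hy
    rw [hL] at hy
    obtain ⟨j, _, rfl⟩ := Finset.mem_image.mp hy
    simp only [hfL]
    have : (0:ℝ) ≤ (j:ℝ)^2 := by positivity
    linarith
  have hRval : ∀ y ∈ R, (m:ℝ)+1 ≤ y := by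
    intro y hy
    rw [hR] at hy
    obtain ⟨j, _, rfl⟩ := Finset.mem_image.mp hy
    simp only [hfR]
    have : (0:ℝ) ≤ (j:ℝ)^2 := by positivity
    linarith
  have hdisj : Disjoint L R := by
    rw [Finset.disjoint_left]
    intro y hyL hyR
    have h1 := hLval y hyL
    have h2 := hRval y hyR
    linarith
  have hcard : s.card = a+b+2 := by
    rw [hs, Finset.card_union_of_disjoint hdisj, hL, hR,
      Finset.card_image_of_injOn hLinj, Finset.card_image_of_injOn hRinj,
      Finset.card_range, Finset.card_range]
    omega
  -- Lagrange interpolation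
  have hids : Set.InjOn id (s : Set ℝ) := Set.injOn_id _
  have hdlt : p.degree < s.card := by
    rw [hcard]
    calc p.degree ≤ (p.natDegree : WithBot ℕ) := Polynomial.degree_le_natDegree
      _ < ((a+b+2 : ℕ) : WithBot ℕ) := by
          exact_mod_cast Nat.lt_succ_of_le hdeg
  have hinterp := Lagrange.eq_interpolate hids hdlt
  -- evaluation of p at x
  have heval : p.eval x = ∑ y ∈ s, p.eval y * (Lagrange.basis s id y).eval x := by
    conv_lhs => rw [hinterp]
    rw [Lagrange.interpolate_apply, Polynomial.eval_finset_sum]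
    apply Finset.sum_congr rfl
    intro y _
    rw [Polynomial.eval_mul, Polynomial.eval_C]
    simp
  -- node values bounded by 1
  have hval1 : ∀ y ∈ s, |p.eval y| ≤ 1 := by
    intro y hy
    rw [hs, Finset.mem_union] at hy
    rcases hy with hy | hy
    · obtain ⟨j, hj, rfl⟩ := Finset.mem_image.mp hy
      simp only [mem_range] at hj
      have hj2 : j^2 ≤ m := le_trans (Nat.pow_le_pow_left (by omega) 2) ham
      have : fL j = ((m - j^2 : ℕ) : ℝ) := by
        simp only [hfL]
        push_cast [hj2]
        ring
      rw [this]
      exact hbound _ (by omega)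
    · obtain ⟨j, hj, rfl⟩ := Finset.mem_image.mp hy
      simp only [mem_range] at hj
      have hj2 : j^2 ≤ b^2 := Nat.pow_le_pow_left (by omega) 2
      have : fR j = ((m + 1 + j^2 : ℕ) : ℝ) := by
        simp only [hfR]
        push_cast
        ring
      rw [this]
      exact hbound _ (by omega)
  -- basis eval as product of ratios
  have hbasis : ∀ y ∈ s, |(Lagrange.basis s id y).eval x|
      = ∏ z ∈ s.erase y, (|x - z| / |y - z|) := by
    intro y _
    rw [Lagrange.basis, Polynomial.eval_prod, Finset.abs_prod]
    apply Finset.prod_congr rfl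
    intro z _
    simp only [Lagrange.basisDivisor, Polynomial.eval_mul, Polynomial.eval_C,
      Polynomial.eval_sub, Polynomial.eval_X, id]
    rw [abs_mul, abs_inv]
    rw [div_eq_inv_mul]
  -- the total bound
  have habs : |p.eval x| ≤ ∑ y ∈ s, ∏ z ∈ s.erase y, (|x - z| / |y - z|) := by
    rw [heval]
    calc |∑ y ∈ s, p.eval y * (Lagrange.basis s id y).eval x|
        ≤ ∑ y ∈ s, |p.eval y * (Lagrange.basis s id y).eval x| :=
          Finset.abs_sum_le_sum_abs _ _
      _ ≤ ∑ y ∈ s, ∏ z ∈ s.erase y, (|x - z| / |y - z|) := by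
          apply Finset.sum_le_sum
          intro y hy
          rw [abs_mul]
          calc |p.eval y| * |(Lagrange.basis s id y).eval x|
              ≤ 1 * |(Lagrange.basis s id y).eval x| := by
                apply mul_le_mul_of_nonneg_right (hval1 y hy) (abs_nonneg _)
            _ = ∏ z ∈ s.erase y, (|x - z| / |y - z|) := by
                rw [one_mul, hbasis y hy]
  -- bound for right nodes
  have hRnode : ∀ i ∈ range (b+1), ∏ z ∈ s.erase (fR i), (|x - z| / |fR i - z|)
      ≤ (u/(1+(i:ℝ)^2)) * (if i = 0 then (1+3*v) else 2*v*(1+3*v)/(i:ℝ)^2) := by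
    intro i hi
    simp only [mem_range] at hi
    have hmem : fR i ∈ R := by
      rw [hR]
      exact Finset.mem_image_of_mem _ (by simp only [mem_range]; omega)
    have hnotL : fR i ∉ L := Finset.disjoint_right.mp hdisj hmem
    have hsplit : s.erase (fR i) = L ∪ R.erase (fR i) := by
      rw [hs, Finset.erase_union_distrib, Finset.erase_eq_of_notMem hnotL]
    have hdisj2 : Disjoint L (R.erase (fR i)) := hdisj.mono_right (Finset.erase_subset _ _)
    rw [hsplit, Finset.prod_union hdisj2]
    have hcross : ∏ z ∈ L, (|x - z| / |fR i - z|)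
        = ∏ j ∈ range (a+1), ((u + (j:ℝ)^2) / (1 + (i:ℝ)^2 + (j:ℝ)^2)) := by
      rw [hL, Finset.prod_image hLinj]
      apply Finset.prod_congr rfl
      intro j _
      have e1 : x - fL j = u + (j:ℝ)^2 := by simp only [hfL, hu]; ring
      have e2 : fR i - fL j = 1 + (i:ℝ)^2 + (j:ℝ)^2 := by simp only [hfL, hfR]; ring
      rw [e1, e2, abs_of_nonneg (by positivity), abs_of_pos (by positivity)]
    have hside : ∏ z ∈ R.erase (fR i), (|x - z| / |fR i - z|)
        = ∏ j ∈ (range (b+1)).erase i, ((v + (j:ℝ)^2) / |(i:ℝ)^2 - (j:ℝ)^2|) := by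
      rw [hR, ← Finset.image_erase hRinj', Finset.prod_image
        (fun j hj k hk h => hRinj' h)]
      apply Finset.prod_congr rfl
      intro j _
      have e1 : |x - fR j| = v + (j:ℝ)^2 := by
        rw [show x - fR j = -(v + (j:ℝ)^2) by simp only [hfR, hv, hu]; ring, abs_neg]
        exact abs_of_nonneg (by positivity)
      have e2 : |fR i - fR j| = |(i:ℝ)^2 - (j:ℝ)^2| := by
        rw [show fR i - fR j = (i:ℝ)^2 - (j:ℝ)^2 by simp only [hfR]; ring]
      rw [e1, e2]
    have hcb : ∏ z ∈ L, (|x - z| / |fR i - z|) ≤ u/(1+(i:ℝ)^2) := by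
      rw [hcross]
      exact cross_bound a hu0 hu1 (by positivity)
    have hsb : ∏ z ∈ R.erase (fR i), (|x - z| / |fR i - z|)
        ≤ (if i = 0 then (1+3*v) else 2*v*(1+3*v)/(i:ℝ)^2) := by
      rw [hside]
      rcases Nat.eq_zero_or_pos i with h0 | h0
      · rw [if_pos h0, h0]
        exact_mod_cast ratio_bound0 b hv0 hv1
      · rw [if_neg (by omega)]
        exact ratio_bound b i h0 (by omega) hv0 hv1
    have hc0 : (0:ℝ) ≤ ∏ z ∈ L, (|x - z| / |fR i - z|) :=
      Finset.prod_nonneg (fun z _ => by positivity)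
    have hs0 : (0:ℝ) ≤ ∏ z ∈ R.erase (fR i), (|x - z| / |fR i - z|) :=
      Finset.prod_nonneg (fun z _ => by positivity)
    apply mul_le_mul hcb hsb hs0 (by positivity)
  -- bound for left nodes
  have hLnode : ∀ i ∈ range (a+1), ∏ z ∈ s.erase (fL i), (|x - z| / |fL i - z|)
      ≤ (v/(1+(i:ℝ)^2)) * (if i = 0 then (1+3*u) else 2*u*(1+3*u)/(i:ℝ)^2) := by
    intro i hi
    simp only [mem_range] at hi
    have hmem : fL i ∈ L := by
      rw [hL]
      exact Finset.mem_image_of_mem _ (by simp only [mem_range]; omega)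
    have hnotR : fL i ∉ R := Finset.disjoint_left.mp hdisj hmem
    have hsplit : s.erase (fL i) = L.erase (fL i) ∪ R := by
      rw [hs, Finset.erase_union_distrib, Finset.erase_eq_of_notMem hnotR]
    have hdisj2 : Disjoint (L.erase (fL i)) R := hdisj.mono_left (Finset.erase_subset _ _)
    rw [hsplit, Finset.prod_union hdisj2]
    have hcross : ∏ z ∈ R, (|x - z| / |fL i - z|)
        = ∏ j ∈ range (b+1), ((v + (j:ℝ)^2) / (1 + (i:ℝ)^2 + (j:ℝ)^2)) := by
      rw [hR, Finset.prod_image hRinj]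
      apply Finset.prod_congr rfl
      intro j _
      have e1 : |x - fR j| = v + (j:ℝ)^2 := by
        rw [show x - fR j = -(v + (j:ℝ)^2) by simp only [hfR, hv, hu]; ring, abs_neg]
        exact abs_of_nonneg (by positivity)
      have e2 : |fL i - fR j| = 1 + (i:ℝ)^2 + (j:ℝ)^2 := by
        rw [show fL i - fR j = -(1 + (i:ℝ)^2 + (j:ℝ)^2) by simp only [hfL, hfR]; ring, abs_neg]
        exact abs_of_pos (by positivity)
      rw [e1, e2]
    have hside : ∏ z ∈ L.erase (fL i), (|x - z| / |fL i - z|)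
        = ∏ j ∈ (range (a+1)).erase i, ((u + (j:ℝ)^2) / |(i:ℝ)^2 - (j:ℝ)^2|) := by
      rw [hL, ← Finset.image_erase hLinj', Finset.prod_image
        (fun j hj k hk h => hLinj' h)]
      apply Finset.prod_congr rfl
      intro j _
      have e1 : x - fL j = u + (j:ℝ)^2 := by simp only [hfL, hu]; ring
      have e2 : |fL i - fL j| = |(i:ℝ)^2 - (j:ℝ)^2| := by
        rw [show fL i - fL j = -((i:ℝ)^2 - (j:ℝ)^2) by simp only [hfL]; ring, abs_neg]
      rw [e1, e2, abs_of_nonneg (by positivity)]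
    have hcb : ∏ z ∈ R, (|x - z| / |fL i - z|) ≤ v/(1+(i:ℝ)^2) := by
      rw [hcross]
      exact cross_bound b hv0 hv1 (by positivity)
    have hsb : ∏ z ∈ L.erase (fL i), (|x - z| / |fL i - z|)
        ≤ (if i = 0 then (1+3*u) else 2*u*(1+3*u)/(i:ℝ)^2) := by
      rw [hside]
      rcases Nat.eq_zero_or_pos i with h0 | h0
      · rw [if_pos h0, h0]
        exact_mod_cast ratio_bound0 a hu0 hu1
      · rw [if_neg (by omega)]
        exact ratio_bound a i h0 (by omega) hu0 hu1
    have hc0 : (0:ℝ) ≤ ∏ z ∈ R, (|x - z| / |fL i - z|) :=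
      Finset.prod_nonneg (fun z _ => by positivity)
    have hs0 : (0:ℝ) ≤ ∏ z ∈ L.erase (fL i), (|x - z| / |fL i - z|) :=
      Finset.prod_nonneg (fun z _ => by positivity)
    have hite : (0:ℝ) ≤ (if i = 0 then (1+3*u) else 2*u*(1+3*u)/(i:ℝ)^2) := by
      split
      · nlinarith
      · positivity
    calc (∏ z ∈ L.erase (fL i), (|x - z| / |fL i - z|)) * ∏ z ∈ R, (|x - z| / |fL i - z|)
        ≤ (if i = 0 then (1+3*u) else 2*u*(1+3*u)/(i:ℝ)^2) * (v/(1+(i:ℝ)^2)) :=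
          mul_le_mul hsb hcb hc0 hite
      _ = (v/(1+(i:ℝ)^2)) * (if i = 0 then (1+3*u) else 2*u*(1+3*u)/(i:ℝ)^2) := by ring
  -- sum the right block
  have hsumblock : ∀ (w w' : ℝ), 0 ≤ w → w ≤ 1 → 0 ≤ w' → w' ≤ 1 → ∀ c : ℕ,
      ∑ i ∈ range (c+1), (w/(1+(i:ℝ)^2)) * (if i = 0 then (1+3*w') else 2*w'*(1+3*w')/(i:ℝ)^2)
      ≤ w*(1+3*w') + (6/5)*w*w'*(1+3*w') := by
    intro w w' hw0 hw1 hw'0 hw'1 c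
    rw [Finset.sum_range_succ']
    have hF0 : (w/(1+((0:ℕ):ℝ)^2)) * (if (0:ℕ) = 0 then (1+3*w') else 2*w'*(1+3*w')/((0:ℕ):ℝ)^2)
        = w*(1+3*w') := by
      rw [if_pos rfl]
      norm_num
    rw [hF0]
    have hterm : ∀ i : ℕ, (w/(1+((i+1:ℕ):ℝ)^2)) * (if (i+1:ℕ) = 0 then (1+3*w') else 2*w'*(1+3*w')/((i+1:ℕ):ℝ)^2)
        = (2*w*w'*(1+3*w')) * (1 / (((i:ℝ)+1)^2 * (((i:ℝ)+1)^2 + 1))) := by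
      intro i
      rw [if_neg (by omega)]
      push_cast
      have h1 : (0:ℝ) < ((i:ℝ)+1)^2 := by positivity
      field_simp
      ring
    rw [Finset.sum_congr rfl (fun i _ => hterm i), ← Finset.mul_sum]
    have hsum := sum_inv_sq_sq_le c
    have hco : (0:ℝ) ≤ 2*w*w'*(1+3*w') :=
      mul_nonneg (mul_nonneg (mul_nonneg (by norm_num) hw0) hw'0) (by linarith)
    have : (2*w*w'*(1+3*w')) * (∑ i ∈ range c, 1 / (((i:ℝ)+1)^2 * (((i:ℝ)+1)^2 + 1)))
        ≤ (2*w*w'*(1+3*w')) * (3/5) := mul_le_mul_of_nonneg_left hsum hco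
    nlinarith
  -- assemble
  have hsumR : ∑ y ∈ R, ∏ z ∈ s.erase y, (|x - z| / |y - z|)
      ≤ u*(1+3*v) + (6/5)*u*v*(1+3*v) := by
    rw [hR, Finset.sum_image hRinj]
    calc ∑ i ∈ range (b+1), ∏ z ∈ s.erase (fR i), (|x - z| / |fR i - z|)
        ≤ ∑ i ∈ range (b+1), (u/(1+(i:ℝ)^2)) * (if i = 0 then (1+3*v) else 2*v*(1+3*v)/(i:ℝ)^2) :=
          Finset.sum_le_sum hRnode
      _ ≤ u*(1+3*v) + (6/5)*u*v*(1+3*v) := hsumblock u v hu0 hu1 hv0 hv1 b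
  have hsumL : ∑ y ∈ L, ∏ z ∈ s.erase y, (|x - z| / |y - z|)
      ≤ v*(1+3*u) + (6/5)*v*u*(1+3*u) := by
    rw [hL, Finset.sum_image hLinj]
    calc ∑ i ∈ range (a+1), ∏ z ∈ s.erase (fL i), (|x - z| / |fL i - z|)
        ≤ ∑ i ∈ range (a+1), (v/(1+(i:ℝ)^2)) * (if i = 0 then (1+3*u) else 2*u*(1+3*u)/(i:ℝ)^2) :=
          Finset.sum_le_sum hLnode
      _ ≤ v*(1+3*u) + (6/5)*v*u*(1+3*u) := hsumblock v u hv0 hv1 hu0 hu1 a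
  have htot : ∑ y ∈ s, ∏ z ∈ s.erase y, (|x - z| / |y - z|)
      = (∑ y ∈ L, ∏ z ∈ s.erase y, (|x - z| / |y - z|))
        + ∑ y ∈ R, ∏ z ∈ s.erase y, (|x - z| / |y - z|) := by
    rw [hs, Finset.sum_union hdisj]
  have hfin : u*(1+3*v) + (6/5)*u*v*(1+3*v) + (v*(1+3*u) + (6/5)*v*u*(1+3*u)) ≤ 4 := by
    rw [hv]
    nlinarith [sq_nonneg (2*u-1), hu0, hu1]
  calc |p.eval x| ≤ ∑ y ∈ s, ∏ z ∈ s.erase y, (|x - z| / |y - z|) := habs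
    _ = _ := htot
    _ ≤ u*(1+3*v) + (6/5)*u*v*(1+3*v) + (v*(1+3*u) + (6/5)*v*u*(1+3*u)) := by
        linarith [hsumL, hsumR]
    _ ≤ 4 := hfin

lemma half_bound (N : ℕ) (hN : 0 < N) (p : Polynomial ℝ)
    (hdeg : (p.natDegree : ℝ) ≤ Real.sqrt N)
    (hbound : ∀ k : ℕ, k ≤ N → |p.eval (k : ℝ)| ≤ 1)
    (x : ℝ) (hx0 : 0 ≤ x) (hx2 : 2*x ≤ N) : |p.eval x| ≤ 4 := by
  set d := p.natDegree with hd
  set m := ⌊x⌋₊ with hm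
  set a := min (Nat.sqrt m) ((d-1)/2) with ha
  set b := d - 1 - a with hb
  have hmx : (m:ℝ) ≤ x := Nat.floor_le hx0
  have hxm : x < (m:ℝ) + 1 := Nat.lt_floor_add_one x
  have ham : a^2 ≤ m := by
    have h1 : a ≤ Nat.sqrt m := min_le_left _ _
    calc a^2 ≤ (Nat.sqrt m)^2 := Nat.pow_le_pow_left h1 2
      _ ≤ m := Nat.sqrt_le' m
  have hdeg' : d ≤ a + b + 1 := by
    have : a ≤ (d-1)/2 := min_le_right _ _
    omega
  -- the real quantities
  have hst0 : (0:ℝ) ≤ Real.sqrt N := Real.sqrt_nonneg _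
  have hst2 : (Real.sqrt N)^2 = (N:ℝ) := Real.sq_sqrt (by positivity)
  have hd2R : (d:ℝ)^2 ≤ (N:ℝ) := by
    calc (d:ℝ)^2 ≤ (Real.sqrt N)^2 := by
          apply pow_le_pow_left₀ (by positivity) hdeg
      _ = (N:ℝ) := hst2
  have hd2 : d^2 ≤ N := by exact_mod_cast hd2R
  have h2m : 2*m ≤ N := by
    have : 2*(m:ℝ) ≤ (N:ℝ) := by linarith
    exact_mod_cast this
  -- the key numeric fact : m + 1 + b^2 ≤ N
  have hbN : m + 1 + b^2 ≤ N := by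
    rcases Nat.eq_zero_or_pos b with hb0 | hb1
    · -- b = 0 : need m + 1 ≤ N
      have hb20 : b^2 = 0 := by rw [hb0]; norm_num
      rcases Nat.eq_zero_or_pos m with hm0 | hm1
      · omega
      · omega
    · -- b ≥ 1, so d ≥ 2 + a
      have hda : b = d - 1 - a := hb
      have hd1 : 1 + a ≤ d := by omega
      rcases le_or_gt ((d-1)/2) (Nat.sqrt m) with hcase | hcase
      · -- a = (d-1)/2 ; b ≤ d/2, use m ≤ N/2, b² ≤ N/4, N ≥ 4
        have haeq : a = (d-1)/2 := by omega
        have h2b : 2*b ≤ d := by omega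
        have hd2ge : 2 ≤ d := by omega
        have hN4 : 4 ≤ N := by
          calc 4 = 2^2 := by norm_num
            _ ≤ d^2 := Nat.pow_le_pow_left hd2ge 2
            _ ≤ N := hd2
        have h4b : 4*b^2 ≤ N := by
          calc 4*b^2 = (2*b)^2 := by ring
            _ ≤ d^2 := Nat.pow_le_pow_left h2b 2
            _ ≤ N := hd2
        -- 4(m+1+b²) ≤ 2N + 4 + N ≤ 4N
        omega
      · -- a = sqrt m, m < (a+1)^2, 2*(a+1) ≤ d
        have haeq : a = Nat.sqrt m := by omega
        have hmlt : m < (a+1)^2 := by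
          rw [haeq]
          exact Nat.lt_succ_sqrt' m
        have h2a : 2*(a+1) ≤ d := by
          have : a + 1 ≤ (d-1)/2 := by omega
          omega
        -- real reasoning
        have hbR : (b:ℝ) ≤ Real.sqrt N - 1 - (a:ℝ) := by
          have h1 : (b:ℝ) = (d:ℝ) - 1 - (a:ℝ) := by
            rw [hda]
            push_cast [Nat.sub_sub]
            rw [Nat.cast_sub (by omega)]
            push_cast
            ring
          rw [h1]
          have : (d:ℝ) ≤ Real.sqrt N := hdeg
          linarith
        have hposb : (0:ℝ) ≤ Real.sqrt N - 1 - (a:ℝ) := by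
          have : ((2*(a+1) : ℕ) : ℝ) ≤ (d:ℝ) := by exact_mod_cast h2a
          push_cast at this
          have hdst : (d:ℝ) ≤ Real.sqrt N := hdeg
          linarith
        have hb2R : (b:ℝ)^2 ≤ (Real.sqrt N - 1 - (a:ℝ))^2 :=
          pow_le_pow_left₀ (by positivity) hbR 2
        have hmR : (m:ℝ) + 1 ≤ ((a:ℝ)+1)^2 := by
          have : ((m+1 : ℕ):ℝ) ≤ (((a+1)^2 : ℕ):ℝ) := by exact_mod_cast hmlt
          push_cast at this
          linarith
        have h2aR : 2*((a:ℝ)+1) ≤ Real.sqrt N := by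
          have : ((2*(a+1) : ℕ) : ℝ) ≤ (d:ℝ) := by exact_mod_cast h2a
          push_cast at this
          have hdst : (d:ℝ) ≤ Real.sqrt N := hdeg
          linarith
        have goalR : (m:ℝ) + 1 + (b:ℝ)^2 ≤ (N:ℝ) := by
          rw [← hst2]
          nlinarith [hb2R, hmR, h2aR, hst0, sq_nonneg ((a:ℝ)+1)]
        exact_mod_cast goalR
  exact core_bound N p hbound m a b ham hbN hdeg' x hmx hxm.le

/-- A polynomial of degree at most √N bounded on the integers 0..N is bounded by 4 on [0,N]. -/
theorem bounded_on_integers (N : ℕ) (hN : 0 < N) (p : Polynomial ℝ)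
    (hdeg : (p.natDegree : ℝ) ≤ Real.sqrt N)
    (hbound : ∀ k : ℕ, k ≤ N → |p.eval (k : ℝ)| ≤ 1) :
    ∀ x ∈ Set.Icc (0 : ℝ) (N : ℝ), |p.eval x| ≤ 4 := by
  intro x hx
  obtain ⟨hx0, hxN⟩ := hx
  rcases le_or_gt (2*x) (N:ℝ) with hhalf | hhalf
  · exact half_bound N hN p hdeg hbound x hx0 hhalf
  · set q : Polynomial ℝ := p.comp (Polynomial.C (N:ℝ) - Polynomial.X) with hq
    have hqdeg : q.natDegree = p.natDegree := by
      rw [hq, Polynomial.natDegree_comp]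
      have : (Polynomial.C (N:ℝ) - Polynomial.X).natDegree = 1 := by
        rw [show Polynomial.C (N:ℝ) - Polynomial.X = -(Polynomial.X - Polynomial.C (N:ℝ)) by ring,
          Polynomial.natDegree_neg, Polynomial.natDegree_X_sub_C]
      rw [this, mul_one]
    have hqeval : ∀ y : ℝ, q.eval y = p.eval ((N:ℝ) - y) := by
      intro y
      rw [hq, Polynomial.eval_comp]
      simp
    have hqbound : ∀ k : ℕ, k ≤ N → |q.eval (k : ℝ)| ≤ 1 := by
      intro k hk
      rw [hqeval]
      have : (N:ℝ) - (k:ℝ) = ((N - k : ℕ) : ℝ) := by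
        push_cast [Nat.cast_sub hk]
        ring
      rw [this]
      exact hbound _ (by omega)
    have h1 : |q.eval ((N:ℝ) - x)| ≤ 4 := by
      apply half_bound N hN q (by rw [hqdeg]; exact hdeg) hqbound
      · linarith
      · linarith
    rw [hqeval] at h1
    have : (N:ℝ) - ((N:ℝ) - x) = x := by ring
    rw [this] at h1
    exact h1
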